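/- A nonnegative integer sequence (f_1, ..., f_m) with |f_i - f_j| ≤ 1 for all i, j is the degree sequence of a simple graph if and only if (i) m ≥ max_i f_i + 1 and (ii) Σ f_i is even. -/

import Mathlib

open Finset

private def EAdj {m : ℕ} (K h : ℕ) (v u : ZMod m) : Prop :=
  (v.val < K ∧ u.val = v.val + h) ∨ (u.val < K ∧ v.val = u.val + h)

private instance {m K h : ℕ} : DecidableRel (EAdj (m := m) K h) := fun v u => by
  unfold EAdj; infer_instance

private lemma realizeZMod (m : ℕ) [NeZero m] (T : Finset ℕ)
    (hT : ∀ t ∈ T, 0 < t ∧ t < m ∧ (m - t) ∈ T)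
    (K h : ℕ) (hK : 0 < K → (0 < h ∧ K ≤ h ∧ h + K ≤ m ∧ h ∉ T)) :
    ∃ (G : SimpleGraph (ZMod m)) (_ : DecidableRel G.Adj),
      ∀ v : ZMod m, G.degree v =
        T.card + (if v.val < K ∨ (h ≤ v.val ∧ v.val < h + K) then 1 else 0) := by
  classical
  set S : Finset (ZMod m) := T.image (Nat.cast) with hS
  have hvalcast : ∀ v : ZMod m, ((v.val : ℕ) : ZMod m) = v := fun v => by
    simp [ZMod.natCast_val, ZMod.cast_id]
  have hmemS : ∀ w : ZMod m, w ∈ S ↔ w.val ∈ T := by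
    intro w
    constructor
    · rintro hw
      rcases Finset.mem_image.mp hw with ⟨t, ht, rfl⟩
      rwa [ZMod.val_cast_of_lt (hT t ht).2.1]
    · intro hw
      exact Finset.mem_image.mpr ⟨w.val, hw, hvalcast w⟩
  have hcastsub : ∀ (x y : ℕ), x + y < m →
      ((x + y : ℕ) : ZMod m) - ((x : ℕ) : ZMod m) = ((y : ℕ) : ZMod m) := by
    intro x y _; push_cast; ring
  -- the graph
  set G : SimpleGraph (ZMod m) :=
    { Adj := fun v u => (u - v) ∈ S ∨ EAdj K h v u
      symm := by
        constructor
        intro v u hadj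
        rcases hadj with hs | he
        · left
          have hv := (hmemS _).mp hs
          obtain ⟨ht0, htm, htT⟩ := hT _ hv
          have h1 : v - u = (((m - (u - v).val : ℕ)) : ZMod m) := by
            have : ((m - (u-v).val : ℕ) : ZMod m) + (((u-v).val : ℕ) : ZMod m) = 0 := by
              rw [← Nat.cast_add]
              rw [Nat.sub_add_cancel htm.le]
              exact ZMod.natCast_self m
            rw [hvalcast] at this
            have := eq_neg_of_add_eq_zero_left this
            rw [this]; ring
          rw [hmemS, h1, ZMod.val_cast_of_lt (by omega)]
          exact htT
        · exact Or.inr he.symm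
      loopless := by
        constructor
        intro v hv
        rcases hv with hs | he
        · rw [sub_self] at hs
          have := (hmemS _).mp hs
          have := (hT _ this).1
          simp [ZMod.val_zero] at this
        · rcases he with ⟨h1, h2⟩ | ⟨h1, h2⟩ <;>
          · have := (hK (by omega)).1; omega } with hG
  have hdec : DecidableRel G.Adj := fun v u =>
    inferInstanceAs (Decidable ((u - v) ∈ S ∨ EAdj K h v u))
  refine ⟨G, hdec, ?_⟩
  intro v
  have hadj : ∀ u, G.Adj v u ↔ ((u - v) ∈ S ∨ EAdj K h v u) := fun u => Iff.rfl
  rw [SimpleGraph.degree, SimpleGraph.neighborFinset_eq_filter]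
  have hsplit : univ.filter (G.Adj v) =
      univ.filter (fun u => (u - v) ∈ S) ∪ univ.filter (fun u => EAdj K h v u) := by
    ext u
    simp only [mem_filter, mem_union, mem_univ, true_and]
    exact hadj u
  have hEimp : ∀ u : ZMod m, EAdj K h v u → (u - v) ∉ S := by
    intro u he hs
    obtain ⟨hh0, hKh, hhK, hhT⟩ := hK (by rcases he with ⟨h1,_⟩|⟨h1,_⟩ <;> omega)
    rcases he with ⟨h1, h2⟩ | ⟨h1, h2⟩
    · have hm' : v.val + h < m := by omega
      have heq : u - v = ((h : ℕ) : ZMod m) := by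
        rw [← hvalcast u, ← hvalcast v, h2, hcastsub v.val h hm']
      rw [heq, hmemS, ZMod.val_cast_of_lt (by omega)] at hs
      exact hhT hs
    · have hm' : u.val + h < m := by omega
      have h3 : v - u = ((h : ℕ) : ZMod m) := by
        rw [← hvalcast v, ← hvalcast u, h2, hcastsub u.val h hm']
      have heq : u - v = ((m - h : ℕ) : ZMod m) := by
        have hmh : ((m - h : ℕ) : ZMod m) + ((h : ℕ) : ZMod m) = 0 := by
          rw [← Nat.cast_add, Nat.sub_add_cancel (by omega), ZMod.natCast_self]
        have := eq_neg_of_add_eq_zero_left hmh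
        rw [← h3] at this
        rw [this]; ring
      rw [heq, hmemS, ZMod.val_cast_of_lt (by omega)] at hs
      have h4 := (hT _ hs).2.2
      rw [Nat.sub_sub_self (by omega)] at h4
      exact hhT h4
  have hdisj : Disjoint (univ.filter (fun u => (u - v) ∈ S))
      (univ.filter (fun u => EAdj K h v u)) := by
    rw [Finset.disjoint_left]
    intro u h1 h2
    exact hEimp u (mem_filter.mp h2).2 (mem_filter.mp h1).2
  rw [hsplit, card_union_of_disjoint hdisj]
  have hcardS : (univ.filter (fun u => (u - v) ∈ S)).card = T.card := by
    have h1 : (univ.filter (fun u => (u - v) ∈ S)).card = S.card := by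
      apply card_nbij' (fun u => u - v) (fun s => v + s)
      · intro a ha; exact (mem_filter.mp ha).2
      · intro b hb
        simp only [mem_coe, mem_filter, mem_univ, true_and, add_sub_cancel_left]
        exact mem_coe.mp hb
      · intro a _; ring
      · intro a _; ring
    rw [h1, hS, card_image_of_injOn]
    intro a ha b hb hab
    have h2 := congrArg ZMod.val hab
    rwa [ZMod.val_cast_of_lt (hT a ha).2.1, ZMod.val_cast_of_lt (hT b hb).2.1] at h2
  have hcardE : (univ.filter (fun u => EAdj K h v u)).card =
      (if v.val < K ∨ (h ≤ v.val ∧ v.val < h + K) then 1 else 0) := by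
    by_cases hv1 : v.val < K
    · obtain ⟨hh0, hKh, hhK, hhT⟩ := hK (by omega)
      rw [if_pos (Or.inl hv1)]
      have hset : univ.filter (fun u => EAdj K h v u) = {((v.val + h : ℕ) : ZMod m)} := by
        ext u
        simp only [mem_filter, mem_univ, true_and, mem_singleton]
        constructor
        · rintro (⟨h1, h2⟩ | ⟨h1, h2⟩)
          · rw [← hvalcast u, h2]
          · omega
        · rintro rfl
          exact Or.inl ⟨hv1, ZMod.val_cast_of_lt (by omega)⟩
      rw [hset, card_singleton]
    · by_cases hv2 : h ≤ v.val ∧ v.val < h + K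
      · obtain ⟨hh0, hKh, hhK, hhT⟩ := hK (by omega)
        rw [if_pos (Or.inr hv2)]
        have hset : univ.filter (fun u => EAdj K h v u) = {((v.val - h : ℕ) : ZMod m)} := by
          ext u
          simp only [mem_filter, mem_univ, true_and, mem_singleton]
          have hval : ((v.val - h : ℕ) : ZMod m).val = v.val - h :=
            ZMod.val_cast_of_lt (by have := v.val_lt; omega)
          constructor
          · rintro (⟨h1, h2⟩ | ⟨h1, h2⟩)
            · omega
            · rw [← hvalcast u]; congr 1; omega
          · rintro rfl
            exact Or.inr ⟨by rw [hval]; omega, by rw [hval]; omega⟩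
        rw [hset, card_singleton]
      · rw [if_neg (by tauto), Finset.card_eq_zero, Finset.filter_eq_empty_iff]
        intro u _
        rintro (⟨h1, h2⟩ | ⟨h1, h2⟩)
        · exact hv1 h1
        · exact hv2 ⟨by omega, by omega⟩
  rw [hcardS, hcardE]


private lemma card_filter_comp_equiv {α β : Type*} [Fintype α] [Fintype β]
    [DecidableEq α] [DecidableEq β] (e : α ≃ β) (p : β → Prop) [DecidablePred p] :
    (univ.filter fun a => p (e a)).card = (univ.filter p).card := by
  apply card_nbij' e e.symm <;> simp [Set.MapsTo, Set.LeftInvOn, Set.RightInvOn]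

private lemma realizeAux (m d k : ℕ) (hm : 0 < m) (hkm : k < m) (hd1 : d + 1 ≤ m)
    (hd2 : 0 < k → d + 2 ≤ m) (hke : Even k) (hcase : d % 2 = 0 ∨ m % 2 = 0) :
    ∃ (G : SimpleGraph (Fin m)) (_ : DecidableRel G.Adj) (B : Finset (Fin m)),
      B.card = k ∧ ∀ v, G.degree v = if v ∈ B then d + 1 else d := by
  classical
  have hnz : NeZero m := ⟨hm.ne'⟩
  set a := d / 2 with ha
  set K := k / 2 with hKdef
  obtain ⟨kc, hkc⟩ := hke
  have h2K : 2 * K = k := by omega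
  set T : Finset ℕ := (Icc 1 a ∪ Icc (m - a) (m - 1)) ∪
      (if d % 2 = 1 then {m / 2} else ∅) with hTdef
  set h : ℕ := if d % 2 = 1 then m / 2 + 1 else a + 1 + (K - (a + 1)) with hhdef
  have hmemT : ∀ t, t ∈ T ↔
      ((1 ≤ t ∧ t ≤ a) ∨ (m - a ≤ t ∧ t ≤ m - 1) ∨ (d % 2 = 1 ∧ t = m / 2)) := by
    intro t
    by_cases hpar : d % 2 = 1 <;>
      simp [hTdef, hpar, Finset.mem_union, Finset.mem_Icc] <;> tauto
  have hT' : ∀ t ∈ T, 0 < t ∧ t < m ∧ (m - t) ∈ T := by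
    intro t ht
    rw [hmemT] at ht
    refine ⟨?_, ?_, (hmemT _).mpr ?_⟩ <;> omega
  have hcardT : T.card = d := by
    have hdisj1 : Disjoint (Icc 1 a) (Icc (m - a) (m - 1)) := by
      rw [Finset.disjoint_left]
      intro t h1 h2
      rw [mem_Icc] at h1 h2
      omega
    have hdisj2 : Disjoint (Icc 1 a ∪ Icc (m - a) (m - 1))
        (if d % 2 = 1 then ({m / 2} : Finset ℕ) else ∅) := by
      rw [Finset.disjoint_right]
      intro t h2 h1
      rw [mem_union, mem_Icc, mem_Icc] at h1
      by_cases hpar : d % 2 = 1 <;> simp [hpar] at h2 <;> omega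
    rw [hTdef, card_union_of_disjoint hdisj2, card_union_of_disjoint hdisj1,
      Nat.card_Icc, Nat.card_Icc]
    by_cases hpar : d % 2 = 1 <;> simp [hpar] <;> omega
  have hK' : 0 < K → (0 < h ∧ K ≤ h ∧ h + K ≤ m ∧ h ∉ T) := by
    intro hK0
    have hk0 : 0 < k := by omega
    have hdm := hd2 hk0
    by_cases hpar : d % 2 = 1
    · have hh : h = m / 2 + 1 := by rw [hhdef, if_pos hpar]
      have hme : m % 2 = 0 := by rcases hcase with hc' | hc' <;> omega
      have hnotT : h ∉ T := by rw [hmemT, hh]; push_neg; omega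
      refine ⟨?_, ?_, ?_, hnotT⟩ <;> rw [hh] <;> omega
    · have hh : h = a + 1 + (K - (a + 1)) := by rw [hhdef, if_neg hpar]
      have hnotT : h ∉ T := by rw [hmemT, hh]; push_neg; omega
      refine ⟨?_, ?_, ?_, hnotT⟩ <;> rw [hh] <;> omega
  obtain ⟨G0, dec0, hdeg0⟩ := realizeZMod m T hT' K h hK'
  set e : Fin m ≃ ZMod m :=
    { toFun := fun i => (i.val : ZMod m)
      invFun := fun v => ⟨v.val, v.val_lt⟩
      left_inv := fun i => Fin.ext (ZMod.val_cast_of_lt i.isLt)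
      right_inv := fun v => by simp [ZMod.natCast_val, ZMod.cast_id] } with he
  have hdeg : ∀ i : Fin m, (SimpleGraph.comap e G0).degree i = G0.degree (e i) := by
    intro i
    rw [SimpleGraph.degree, SimpleGraph.degree, SimpleGraph.neighborFinset_eq_filter,
      SimpleGraph.neighborFinset_eq_filter]
    exact card_filter_comp_equiv e (G0.Adj (e i))
  have hlt : ∀ x ∈ range K ∪ Ico h (h + K), x < m := by
    intro x hx
    rw [mem_union, mem_range, mem_Ico] at hx
    rcases Nat.eq_zero_or_pos K with h0 | h0
    · omega
    · have := hK' h0; omega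
  set B : Finset (Fin m) := (range K ∪ Ico h (h + K)).attachFin hlt with hB
  have hcardB : B.card = k := by
    rw [hB, Finset.card_attachFin, card_union_of_disjoint]
    · rw [Nat.card_Ico, card_range]; omega
    · rw [Finset.disjoint_left]
      intro x h1 h2
      rw [mem_range] at h1
      rw [mem_Ico] at h2
      have h0 : 0 < K := by omega
      have := hK' h0
      omega
  refine ⟨SimpleGraph.comap e G0, fun u v => dec0 _ _, B, hcardB, ?_⟩
  intro v
  rw [hdeg v, hdeg0 (e v)]
  have hev : (e v).val = v.val := ZMod.val_cast_of_lt v.isLt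
  rw [hcardT, hev]
  have hiff : (v ∈ B) ↔ (v.val < K ∨ (h ≤ v.val ∧ v.val < h + K)) := by
    rw [hB, Finset.mem_attachFin, mem_union, mem_range, mem_Ico]
  by_cases hc : v.val < K ∨ (h ≤ v.val ∧ v.val < h + K)
  · rw [if_pos hc, if_pos (hiff.mpr hc)]
  · rw [if_neg hc, if_neg (fun hx => hc (hiff.mp hx))]
    omega

private lemma realize (m d k : ℕ) (hm : 0 < m) (hkm : k < m) (hd1 : d + 1 ≤ m)
    (hd2 : 0 < k → d + 2 ≤ m) (hpar : Even (m * d + k)) :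
    ∃ (G : SimpleGraph (Fin m)) (_ : DecidableRel G.Adj) (B : Finset (Fin m)),
      B.card = k ∧ ∀ v, G.degree v = if v ∈ B then d + 1 else d := by
  classical
  by_cases hc : d % 2 = 0 ∨ m % 2 = 0
  · have hmd : Even (m * d) := by
      rcases hc with hc | hc
      · exact Even.mul_left (Nat.even_iff.mpr hc) m
      · exact Even.mul_right (Nat.even_iff.mpr hc) d
    have hke : Even k := by
      rcases hmd with ⟨c1, hc1⟩; rcases hpar with ⟨c2, hc2⟩
      exact ⟨c2 - c1, by omega⟩
    exact realizeAux m d k hm hkm hd1 hd2 hke hc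
  · push_neg at hc
    obtain ⟨hdo, hmo⟩ := hc
    have hdo' : d % 2 = 1 := by omega
    have hmo' : m % 2 = 1 := by omega
    have hmdo : Odd (m * d) := (Nat.odd_iff.mpr hmo').mul (Nat.odd_iff.mpr hdo')
    have hko : k % 2 = 1 := by
      rcases hmdo with ⟨c1, hc1⟩; rcases hpar with ⟨c2, hc2⟩; omega
    have hk0 : 0 < k := by omega
    have hdm := hd2 hk0
    obtain ⟨G, dec, B, hB, hdeg⟩ := realizeAux m (m - d - 2) (m - k) hm (by omega) (by omega)
      (fun _ => by omega) (⟨(m - k) / 2, by omega⟩) (Or.inl (by omega))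
    refine ⟨Gᶜ, fun u v => inferInstanceAs (Decidable (u ≠ v ∧ ¬G.Adj u v)), Bᶜ, ?_, ?_⟩
    · rw [Finset.card_compl, hB, Fintype.card_fin]; omega
    · intro v
      rw [SimpleGraph.degree_compl, hdeg v, Fintype.card_fin]
      by_cases hv : v ∈ B
      · rw [if_pos hv, if_neg (fun hx => (Finset.mem_compl.mp hx) hv)]; omega
      · rw [if_neg hv, if_pos (Finset.mem_compl.mpr hv)]; omega

/-- A nonnegative integer sequence `(f 1, …, f m)` with `|f i - f j| ≤ 1` for all `i, j`
is the degree sequence of a simple graph iff (i) `m ≥ max f i + 1` and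
(ii) `Σ f i` is even. -/
theorem stmt0 (m : ℕ) (f : Fin m → ℕ)
    (hflat : ∀ i j, |(f i : ℤ) - (f j : ℤ)| ≤ 1) :
    (∃ (G : SimpleGraph (Fin m)) (_ : DecidableRel G.Adj) (σ : Equiv.Perm (Fin m)),
        ∀ i, G.degree (σ i) = f i)
      ↔ ((∀ i, f i + 1 ≤ m) ∧ Even (∑ i, f i)) := by
  classical
  constructor
  · rintro ⟨G, inst, σ, hσ⟩
    constructor
    · intro i
      have h1 : G.degree (σ i) < m := by
        have := G.degree_lt_card_verts (σ i)
        rwa [Fintype.card_fin] at this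
      rw [hσ i] at h1
      omega
    · have hsum : ∑ i, f i = ∑ v, G.degree v := by
        rw [← Equiv.sum_comp σ (fun v => G.degree v)]
        exact Finset.sum_congr rfl (fun i _ => (hσ i).symm)
      rw [hsum, G.sum_degrees_eq_twice_card_edges]
      exact even_two_mul _
  · rintro ⟨hmax, hsum⟩
    rcases Nat.eq_zero_or_pos m with rfl | hm
    · exact ⟨⊥, inferInstance, Equiv.refl _, fun i => i.elim0⟩
    obtain ⟨i₀, -, hmin⟩ := Finset.exists_min_image Finset.univ f ⟨⟨0, hm⟩, Finset.mem_univ _⟩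
    set d := f i₀ with hd
    have hvals : ∀ i, f i = d ∨ f i = d + 1 := by
      intro i
      have h1 := hflat i i₀
      have h2 := hmin i (Finset.mem_univ i)
      rw [abs_le] at h1
      omega
    set k := (univ.filter (fun i => f i = d + 1)).card with hk
    have hkm : k < m := by
      have h1 : k ≤ m := by
        calc k ≤ univ.card := Finset.card_filter_le _ _
        _ = m := by rw [Finset.card_univ, Fintype.card_fin]
      rcases h1.lt_or_eq with h | h
      · exact h
      · exfalso
        have h2 : (univ.filter (fun i => f i = d + 1)) = univ :=
          Finset.eq_univ_of_card _ (by rw [← hk, h, Fintype.card_fin])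
        have hi := Finset.mem_filter.mp (h2 ▸ Finset.mem_univ i₀)
        omega
    have hd1 : d + 1 ≤ m := hmax i₀
    have hd2 : 0 < k → d + 2 ≤ m := by
      intro hk0
      obtain ⟨j, hj⟩ := Finset.card_pos.mp hk0
      have h1 := Finset.mem_filter.mp hj
      have h2 := hmax j
      omega
    have hsum' : ∑ i, f i = m * d + k := by
      have h1 : ∀ i ∈ univ, f i = d + (if f i = d + 1 then 1 else 0) := by
        intro i _
        rcases hvals i with h | h
        · rw [h, if_neg (by omega)]
          omega
        · rw [h, if_pos rfl]
      rw [Finset.sum_congr rfl h1, Finset.sum_add_distrib, Finset.sum_const,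
        Finset.card_univ, Fintype.card_fin, smul_eq_mul, hk, Finset.card_filter]
    have hpar : Even (m * d + k) := hsum' ▸ hsum
    obtain ⟨G, inst, B, hB, hdeg⟩ := realize m d k hm hkm hd1 hd2 hpar
    set p := fun i : Fin m => f i = d + 1 with hp
    set q := fun v : Fin m => v ∈ B with hq
    have hcp : Fintype.card {i // p i} = k := by
      rw [Fintype.card_subtype, hk]
    have hcq : Fintype.card {v // q v} = k := by
      have e0 : {v // q v} ≃ {v // v ∈ B} := Equiv.subtypeEquivRight (fun v => Iff.rfl)
      rw [Fintype.card_congr e0, Fintype.card_coe, hB]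
    set e₁ : {i // p i} ≃ {v // q v} := Fintype.equivOfCardEq (hcp.trans hcq.symm) with he₁
    set e₂ : {i // ¬p i} ≃ {v // ¬q v} := Fintype.equivOfCardEq
      (by rw [Fintype.card_subtype_compl, Fintype.card_subtype_compl, hcp, hcq]) with he₂
    set σ : Equiv.Perm (Fin m) :=
      (Equiv.sumCompl p).symm.trans ((e₁.sumCongr e₂).trans (Equiv.sumCompl q)) with hσdef
    refine ⟨G, inst, σ, ?_⟩
    intro i
    by_cases hi : p i
    · have h1 : σ i = ↑(e₁ ⟨i, hi⟩) := by
        rw [hσdef]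
        simp [Equiv.sumCompl_symm_apply_of_pos hi]
      rw [h1, hdeg, if_pos (e₁ ⟨i, hi⟩).2]
      exact hi.symm
    · have h1 : σ i = ↑(e₂ ⟨i, hi⟩) := by
        rw [hσdef]
        simp [Equiv.sumCompl_symm_apply_of_neg hi]
      rw [h1, hdeg, if_neg (e₂ ⟨i, hi⟩).2]
      rcases hvals i with h | h
      · exact h.symm
      · exact absurd h hi
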